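/- Let k ≥ 2 and m ≥ 2 be integers and ρ ∈ (0,1). Then DB(k,m,ρ) > DB(k^m, 1, ρ); explicitly, 1 − (1/k + (1 − 1/k)ρ)^{m/2} > 1 − (k^{−m} + (1 − k^{−m})ρ)^{1/2}. In words: the hierarchical regular (k,m) Gaussian tree has a strictly larger diversification benefit than the flat (one-level) tree aggregating the same N = k^m individual risks directly with the same dependency parameter ρ. -/

import Mathlib

private lemma key_mul (ρ x y : ℝ) (hρ0 : 0 < ρ) (hρ1 : ρ < 1)
    (hx0 : 0 < x) (hx1 : x < 1) (hy0 : 0 < y) (hy1 : y < 1) :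
    (x + (1 - x) * ρ) * (y + (1 - y) * ρ) < x * y + (1 - x * y) * ρ := by
  nlinarith [mul_pos (mul_pos hρ0 (sub_pos.2 hρ1)) (mul_pos (sub_pos.2 hx1) (sub_pos.2 hy1))]

private lemma key_pow (ρ c : ℝ) (hρ0 : 0 < ρ) (hρ1 : ρ < 1)
    (hc0 : 0 < c) (hc1 : c < 1) :
    ∀ m : ℕ, 2 ≤ m → (c + (1 - c) * ρ) ^ m < c ^ m + (1 - c ^ m) * ρ := by
  intro m hm
  induction m with
  | zero => omega
  | succ n ih =>
    rcases Nat.lt_or_ge n 2 with hn | hn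
    · interval_cases n
      · omega
      · have := key_mul ρ c c hρ0 hρ1 hc0 hc1 hc0 hc1
        calc (c + (1 - c) * ρ) ^ 2 = (c + (1 - c) * ρ) * (c + (1 - c) * ρ) := by ring
          _ < c * c + (1 - c * c) * ρ := this
          _ = c ^ 2 + (1 - c ^ 2) * ρ := by ring
    · have h1 : (c + (1 - c) * ρ) ^ n < c ^ n + (1 - c ^ n) * ρ := ih hn
      have hb : 0 < c + (1 - c) * ρ := by nlinarith
      have hcn0 : 0 < c ^ n := pow_pos hc0 n
      have hcn1 : c ^ n < 1 := pow_lt_one₀ hc0.le hc1 (by omega)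
      have h2 := key_mul ρ (c ^ n) c hρ0 hρ1 hcn0 hcn1 hc0 hc1
      calc (c + (1 - c) * ρ) ^ (n + 1)
          = (c + (1 - c) * ρ) ^ n * (c + (1 - c) * ρ) := by ring
        _ < (c ^ n + (1 - c ^ n) * ρ) * (c + (1 - c) * ρ) := by
            exact mul_lt_mul_of_pos_right h1 hb
        _ < c ^ n * c + (1 - c ^ n * c) * ρ := h2
        _ = c ^ (n + 1) + (1 - c ^ (n + 1)) * ρ := by ring

/-- The hierarchical regular `(k,m)` Gaussian tree (`k ≥ 2`, `m ≥ 2`) has a strictly larger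
diversification benefit than the flat (one-level) tree aggregating the same `N = k^m` individual
risks directly with the same dependency parameter `ρ ∈ (0,1)`:
`1 - (1/k + (1 - 1/k)ρ)^(m/2) > 1 - (k^(-m) + (1 - k^(-m))ρ)^(1/2)`. -/
theorem hierarchical_beats_flat (k m : ℕ) (hk : 2 ≤ k) (hm : 2 ≤ m) (ρ : ℝ)
    (hρ0 : 0 < ρ) (hρ1 : ρ < 1) :
    1 - (1 / (k : ℝ) + (1 - 1 / (k : ℝ)) * ρ) ^ ((m : ℝ) / 2)
      > 1 - (((k : ℝ) ^ m)⁻¹ + (1 - ((k : ℝ) ^ m)⁻¹) * ρ) ^ ((1 : ℝ) / 2) := by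
  have hk1 : (1 : ℝ) < (k : ℝ) := by exact_mod_cast Nat.lt_of_lt_of_le one_lt_two hk
  set c : ℝ := 1 / (k : ℝ) with hc
  have hc0 : 0 < c := by positivity
  have hc1 : c < 1 := by
    rw [hc, div_lt_one (by linarith)]; exact hk1
  have hcm : ((k : ℝ) ^ m)⁻¹ = c ^ m := by
    rw [hc, one_div, inv_pow]
  rw [hcm]
  have hb : 0 < c + (1 - c) * ρ := by nlinarith
  have hkey := key_pow ρ c hρ0 hρ1 hc0 hc1 m hm
  have h1 : (c + (1 - c) * ρ) ^ ((m : ℝ) / 2)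
      = ((c + (1 - c) * ρ) ^ m) ^ ((1 : ℝ) / 2) := by
    rw [← Real.rpow_natCast (c + (1 - c) * ρ) m, ← Real.rpow_mul hb.le]
    ring_nf
  rw [h1]
  have h2 : ((c + (1 - c) * ρ) ^ m) ^ ((1 : ℝ) / 2)
      < (c ^ m + (1 - c ^ m) * ρ) ^ ((1 : ℝ) / 2) := by
    apply Real.rpow_lt_rpow (by positivity) hkey (by norm_num)
  linarith
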